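/- Let e₁, e₂, e₃, e₄ be orthonormal vectors in Im 𝕆 ≅ ℝ⁷ such that (e₁−ie₂) × (e₃−ie₄) = 0 in the complexification. Then (e₁ × e₂, e₃) = 0 and e₄ = −e₂ × (e₁ × e₃). -/
import Mathlib


open scoped ComplexConjugate

/-- The standard complex-bilinear symmetric form on `ℂⁿ`. -/
noncomputable def Bform {n : ℕ} (u v : Fin n → ℂ) : ℂ := ∑ i, u i * v i

/-- Componentwise complex conjugation on `ℂⁿ`. -/
noncomputable def conjn {n : ℕ} (v : Fin n → ℂ) : Fin n → ℂ := fun i => conj (v i)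

lemma Bform_comm' {n : ℕ} (u v : Fin n → ℂ) : Bform u v = Bform v u := by
  simp [Bform, mul_comm]

lemma Bform_neg_right' {n : ℕ} (u v : Fin n → ℂ) : Bform u (-v) = -Bform u v := by
  simp [Bform, mul_neg]

lemma Bform_zero_left' {n : ℕ} (v : Fin n → ℂ) : Bform 0 v = 0 := by
  simp [Bform]

lemma real_self_zero' {n : ℕ} (v : Fin n → ℂ) (hv : conjn v = v) (h : Bform v v = 0) :
    v = 0 := by
  have him : ∀ i, (v i).im = 0 := by
    intro i
    have := congrFun hv i
    simpa [conjn, Complex.conj_eq_iff_im] using this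
  have hv' : ∀ i, v i = ((v i).re : ℂ) := by
    intro i
    exact (Complex.ext (by simp) (by simp [him i])).symm
  have hsum : (∑ i, (v i).re * (v i).re) = 0 := by
    have hc : ((∑ i, (v i).re * (v i).re : ℝ) : ℂ) = 0 := by
      push_cast
      rw [← h]
      unfold Bform
      exact Finset.sum_congr rfl fun i _ => by rw [← hv' i]
    exact_mod_cast hc
  have hz := (Finset.sum_eq_zero_iff_of_nonneg (fun i _ => mul_self_nonneg ((v i).re))).mp hsum
  funext i
  exact Complex.ext (by simpa using mul_self_eq_zero.mp (hz i (Finset.mem_univ i))) (him i)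

/-- If e₁,e₂,e₃,e₄ are orthonormal real vectors with
(e₁−ie₂) × (e₃−ie₄) = 0, then (e₁ × e₂, e₃) = 0 and e₄ = −e₂ × (e₁ × e₃). -/
theorem orthonormal_annihilating_quadruple
    (cross : (Fin 7 → ℂ) →ₗ[ℂ] (Fin 7 → ℂ) →ₗ[ℂ] (Fin 7 → ℂ))
    (h1 : ∀ u v w, Bform u (cross v w) = Bform (cross u v) w)
    (h2 : ∀ u v w : Fin 7 → ℂ, cross u (cross v w) + cross (cross u v) w
        = (2 * Bform u w) • v - Bform u v • w - Bform v w • u)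
    (hconj : ∀ u v, conjn (cross u v) = cross (conjn u) (conjn v))
    (e : Fin 4 → (Fin 7 → ℂ))
    (hreal : ∀ i, conjn (e i) = e i)
    (honb : ∀ i j, Bform (e i) (e j) = if i = j then 1 else 0)
    (huv : cross (e 0 - Complex.I • e 1) (e 2 - Complex.I • e 3) = 0) :
    Bform (cross (e 0) (e 1)) (e 2) = 0 ∧
      e 3 = -(cross (e 1) (cross (e 0) (e 2))) := by
  -- isotropy of u × u
  have hiso : ∀ u : Fin 7 → ℂ, Bform (cross u u) (cross u u) = 0 := by
    intro u
    have h3 := h2 u u u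
    have hr : (2 * Bform u u) • u - Bform u u • u - Bform u u • u = 0 := by
      rw [two_mul, add_smul]; abel
    rw [hr] at h3
    have h4 : cross u (cross u u) = -(cross (cross u u) u) :=
      eq_neg_of_add_eq_zero_left h3
    have key : Bform (cross u u) (cross u u) = -(Bform (cross u u) (cross u u)) := by
      calc Bform (cross u u) (cross u u)
          = Bform u (cross u (cross u u)) := (h1 u u (cross u u)).symm
        _ = Bform u (-(cross (cross u u) u)) := by rw [h4]
        _ = -(Bform u (cross (cross u u) u)) := Bform_neg_right' _ _
        _ = -(Bform (cross (cross u u) u) u) := by rw [Bform_comm']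
        _ = -(Bform (cross u u) (cross u u)) := by rw [← h1 (cross u u) u u]
    linear_combination (1/2 : ℂ) * key
  have hselfreal : ∀ u : Fin 7 → ℂ, conjn u = u → cross u u = 0 := by
    intro u hu
    exact real_self_zero' _ (by rw [hconj, hu]) (hiso u)
  have hself : ∀ i : Fin 4, cross (e i) (e i) = 0 := fun i => hselfreal (e i) (hreal i)
  -- pointwise realness of cross products of the e's
  have him : ∀ i j : Fin 4, ∀ k, ((cross (e i) (e j)) k).im = 0 := by
    intro i j k
    have h := congrFun (by rw [hconj, hreal, hreal] :
      conjn (cross (e i) (e j)) = cross (e i) (e j)) k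
    simpa [conjn, Complex.conj_eq_iff_im] using h
  -- expansion of huv
  have hexp : ∀ k, (cross (e 0) (e 2)) k - (cross (e 1) (e 3)) k
      - Complex.I * ((cross (e 0) (e 3)) k + (cross (e 1) (e 2)) k) = 0 := by
    intro k
    have h := congrFun huv k
    simp only [map_sub, map_smul, LinearMap.sub_apply, LinearMap.smul_apply,
      Pi.sub_apply, Pi.smul_apply, smul_eq_mul, Pi.zero_apply] at h
    linear_combination h - (cross (e 1) (e 3)) k * Complex.I_mul_I
  -- real and imaginary parts
  have hX : cross (e 0) (e 2) = cross (e 1) (e 3) := by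
    funext k
    have h := hexp k
    apply Complex.ext
    · have hre := congrArg Complex.re h
      simp [Complex.mul_re, Complex.mul_im, him 0 3 k, him 1 2 k] at hre
      linarith
    · rw [him 0 2 k, him 1 3 k]
  have hY : cross (e 0) (e 3) = -(cross (e 1) (e 2)) := by
    funext k
    have h := hexp k
    apply Complex.ext
    · have hi := congrArg Complex.im h
      simp [Complex.mul_re, Complex.mul_im, him 0 2 k, him 1 3 k] at hi
      simp only [Pi.neg_apply, Complex.neg_re]
      linarith
    · simp [him 0 3 k, him 1 2 k]
  constructor
  · have hbc : cross (e 1) (e 2) = -(cross (e 0) (e 3)) := by rw [hY, neg_neg]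
    calc Bform (cross (e 0) (e 1)) (e 2)
        = Bform (e 0) (cross (e 1) (e 2)) := (h1 _ _ _).symm
      _ = Bform (e 0) (-(cross (e 0) (e 3))) := by rw [hbc]
      _ = -(Bform (e 0) (cross (e 0) (e 3))) := Bform_neg_right' _ _
      _ = -(Bform (cross (e 0) (e 0)) (e 3)) := by rw [h1]
      _ = 0 := by rw [hself 0, Bform_zero_left', neg_zero]
  · have hb13 : Bform (e 1) (e 3) = 0 := by
      rw [honb, if_neg (by decide)]
    have hb11 : Bform (e 1) (e 1) = 1 := by
      rw [honb]; norm_num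
    have h5 := h2 (e 1) (e 1) (e 3)
    rw [hself 1, hb13, hb11] at h5
    simp only [map_zero, LinearMap.zero_apply, add_zero, mul_zero, zero_smul,
      one_smul, sub_zero, zero_sub] at h5
    rw [hX]
    rw [h5, neg_neg]
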